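/- arXiv:2005.06794 — 3 statements merged into one kernel-verified Lean document; each statement's English description precedes it below -/
import Mathlib

section
/- Let U ⊆ ℝ² be open and let u : U → ℝ be a smooth solution of Burgers' equation u_t + u·u_x = u_{xx} on U such that u_{tx}·u_{xxx} − u_{xx}·u_{txx} ≠ 0 everywhere on U. Let h : W → ℝ be a smooth function on an open set W ⊆ ℝ² containing {(u_x(p), u_{xx}(p)) : p ∈ U}, and suppose u_{xxx}(p) = h(u_x(p), u_{xx}(p)) for all p ∈ U. Then h satisfies the quotient equation of Burgers' equation along the solution: for every p ∈ U, writing I = u_x(p), J = u_{xx}(p), one has J²·h_{II} + 2·J·h·h_{IJ} + h²·h_{JJ} + I²·h_I + 3·I·J·h_J − 4·I·h − 3·J² = 0, where h and all its partial derivatives (h_I = ∂₁h, h_J = ∂₂h, h_{II} = ∂₁²h, h_{IJ} = ∂₁∂₂h, h_{JJ} = ∂₂²h) are evaluated at (I,J). -/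
open Real

/-- Partial derivative of a function of two real variables w.r.t. its first argument. -/
noncomputable def d1 (f : ℝ → ℝ → ℝ) (a b : ℝ) : ℝ := deriv (fun s => f s b) a

/-- Partial derivative of a function of two real variables w.r.t. its second argument. -/
noncomputable def d2 (f : ℝ → ℝ → ℝ) (a b : ℝ) : ℝ := deriv (fun s => f a s) b

/-- A function of two real variables is smooth (infinitely differentiable). -/
def Smooth2 (f : ℝ → ℝ → ℝ) : Prop := ContDiff ℝ (⊤ : ℕ∞) (fun p : ℝ × ℝ => f p.1 p.2)

/-- A function of two real variables is smooth on a set `U ⊆ ℝ²`. -/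
def Smooth2On (f : ℝ → ℝ → ℝ) (U : Set (ℝ × ℝ)) : Prop :=
  ContDiffOn ℝ (⊤ : ℕ∞) (fun p : ℝ × ℝ => f p.1 p.2) U


noncomputable def pd (v : ℝ × ℝ) (G : ℝ × ℝ → ℝ) : ℝ × ℝ → ℝ := fun p => fderiv ℝ G p v

lemma pd_smooth {U : Set (ℝ × ℝ)} (hU : IsOpen U) {G : ℝ × ℝ → ℝ}
    (hG : ContDiffOn ℝ (⊤ : ℕ∞) G U) (v : ℝ × ℝ) : ContDiffOn ℝ (⊤ : ℕ∞) (pd v G) U := by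
  have h1 : ContDiffOn ℝ (⊤ : ℕ∞) (fderiv ℝ G) U := by
    apply hG.fderiv_of_isOpen hU
    simp
  exact h1.clm_apply contDiffOn_const

lemma diffAt {U : Set (ℝ × ℝ)} (hU : IsOpen U) {G : ℝ × ℝ → ℝ}
    (hG : ContDiffOn ℝ (⊤ : ℕ∞) G U) {p : ℝ × ℝ} (hp : p ∈ U) : DifferentiableAt ℝ G p :=
  ((hG p hp).contDiffAt (hU.mem_nhds hp)).differentiableAt (by simp)

lemma deriv1_eq {G : ℝ × ℝ → ℝ} {a b : ℝ} (h : DifferentiableAt ℝ G (a, b)) :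
    deriv (fun s => G (s, b)) a = pd (1, 0) G (a, b) := by
  have h2 : HasDerivAt (fun s : ℝ => (s, b)) ((1 : ℝ), (0 : ℝ)) a :=
    (hasDerivAt_id a).prodMk (hasDerivAt_const a b)
  exact (h.hasFDerivAt.comp_hasDerivAt a h2).deriv

lemma deriv2_eq {G : ℝ × ℝ → ℝ} {a b : ℝ} (h : DifferentiableAt ℝ G (a, b)) :
    deriv (fun s => G (a, s)) b = pd (0, 1) G (a, b) := by
  have h2 : HasDerivAt (fun s : ℝ => (a, s)) ((0 : ℝ), (1 : ℝ)) b :=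
    (hasDerivAt_const b a).prodMk (hasDerivAt_id b)
  exact (h.hasFDerivAt.comp_hasDerivAt b h2).deriv

lemma clairaut {U : Set (ℝ × ℝ)} (hU : IsOpen U) {G : ℝ × ℝ → ℝ}
    (hG : ContDiffOn ℝ (⊤ : ℕ∞) G U) {p : ℝ × ℝ} (hp : p ∈ U) (v w : ℝ × ℝ) :
    pd w (pd v G) p = pd v (pd w G) p := by
  have hsym : IsSymmSndFDerivAt ℝ G p :=
    ((hG p hp).contDiffAt (hU.mem_nhds hp)).isSymmSndFDerivAt (by rw [minSmoothness_of_isRCLikeNormedField]; exact (WithTop.coe_le_coe.mpr le_top : ((2 : ℕ∞) : WithTop ℕ∞) ≤ ((⊤ : ℕ∞) : WithTop ℕ∞)))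
  have hd : DifferentiableAt ℝ (fderiv ℝ G) p := by
    have := (hG.fderiv_of_isOpen hU (by simp) : ContDiffOn ℝ (⊤:ℕ∞) (fderiv ℝ G) U)
    exact ((this p hp).contDiffAt (hU.mem_nhds hp)).differentiableAt (by simp)
  have e : ∀ z : ℝ × ℝ, fderiv ℝ (fun q => fderiv ℝ G q z) p
      = (fderiv ℝ (fderiv ℝ G) p).flip z := by
    intro z
    have := fderiv_clm_apply (c := fderiv ℝ G) (u := fun _ => z) hd (differentiableAt_const z)
    simpa using this
  show fderiv ℝ (fun q => fderiv ℝ G q v) p w = fderiv ℝ (fun q => fderiv ℝ G q w) p v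
  rw [e v, e w]
  simpa using (hsym v w).symm

lemma pd_congr {U : Set (ℝ × ℝ)} (hU : IsOpen U) {A B : ℝ × ℝ → ℝ} (h : ∀ r ∈ U, A r = B r)
    {p : ℝ × ℝ} (hp : p ∈ U) (v : ℝ × ℝ) : pd v A p = pd v B p := by
  unfold pd
  rw [Filter.EventuallyEq.fderiv_eq (Filter.eventuallyEq_of_mem (hU.mem_nhds hp) h)]

lemma d1_bridge {U : Set (ℝ × ℝ)} (hU : IsOpen U) {f : ℝ → ℝ → ℝ} {G : ℝ × ℝ → ℝ}
    (hG : ContDiffOn ℝ (⊤ : ℕ∞) G U) (heq : ∀ r ∈ U, f r.1 r.2 = G r) {p : ℝ × ℝ}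
    (hp : p ∈ U) : d1 f p.1 p.2 = pd (1, 0) G p := by
  have hcont : Continuous (fun s : ℝ => (s, p.2)) := by fun_prop
  have hm : {s : ℝ | (s, p.2) ∈ U} ∈ nhds p.1 :=
    hcont.continuousAt.preimage_mem_nhds (hU.mem_nhds (by simpa using hp))
  have hev : (fun s => f s p.2) =ᶠ[nhds p.1] (fun s => G (s, p.2)) := by
    filter_upwards [hm] with s hs using heq (s, p.2) hs
  unfold d1
  rw [Filter.EventuallyEq.deriv_eq hev]
  have := deriv1_eq (G := G) (a := p.1) (b := p.2) (diffAt hU hG (by simpa using hp))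
  simpa using this

lemma d2_bridge {U : Set (ℝ × ℝ)} (hU : IsOpen U) {f : ℝ → ℝ → ℝ} {G : ℝ × ℝ → ℝ}
    (hG : ContDiffOn ℝ (⊤ : ℕ∞) G U) (heq : ∀ r ∈ U, f r.1 r.2 = G r) {p : ℝ × ℝ}
    (hp : p ∈ U) : d2 f p.1 p.2 = pd (0, 1) G p := by
  have hcont : Continuous (fun s : ℝ => (p.1, s)) := by fun_prop
  have hm : {s : ℝ | (p.1, s) ∈ U} ∈ nhds p.2 :=
    hcont.continuousAt.preimage_mem_nhds (hU.mem_nhds (by simpa using hp))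
  have hev : (fun s => f p.1 s) =ᶠ[nhds p.2] (fun s => G (p.1, s)) := by
    filter_upwards [hm] with s hs using heq (p.1, s) hs
  unfold d2
  rw [Filter.EventuallyEq.deriv_eq hev]
  have := deriv2_eq (G := G) (a := p.1) (b := p.2) (diffAt hU hG (by simpa using hp))
  simpa using this

lemma pd_sub_mul {A B C : ℝ × ℝ → ℝ} {p v : ℝ × ℝ} (hA : DifferentiableAt ℝ A p)
    (hB : DifferentiableAt ℝ B p) (hC : DifferentiableAt ℝ C p) :
    pd v (fun r => A r - B r * C r) p
      = pd v A p - (pd v B p * C p + B p * pd v C p) := by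
  have H : HasFDerivAt (fun r => A r - B r * C r)
      (fderiv ℝ A p - (B p • fderiv ℝ C p + C p • fderiv ℝ B p)) p :=
    hA.hasFDerivAt.sub (hB.hasFDerivAt.mul hC.hasFDerivAt)
  have h2 := H.fderiv
  unfold pd
  rw [h2]
  simp
  ring

lemma pd_shape3 {A B C D E : ℝ × ℝ → ℝ} {p v : ℝ × ℝ} (hA : DifferentiableAt ℝ A p)
    (hB : DifferentiableAt ℝ B p) (hC : DifferentiableAt ℝ C p)
    (hD : DifferentiableAt ℝ D p) (hE : DifferentiableAt ℝ E p) :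
    pd v (fun r => A r - B r * C r - D r * E r) p
      = pd v A p - (pd v B p * C p + B p * pd v C p)
        - (pd v D p * E p + D p * pd v E p) := by
  have H : HasFDerivAt (fun r => A r - B r * C r - D r * E r)
      (fderiv ℝ A p - (B p • fderiv ℝ C p + C p • fderiv ℝ B p)
        - (D p • fderiv ℝ E p + E p • fderiv ℝ D p)) p :=
    (hA.hasFDerivAt.sub (hB.hasFDerivAt.mul hC.hasFDerivAt)).sub
      (hD.hasFDerivAt.mul hE.hasFDerivAt)
  have h2 := H.fderiv
  unfold pd
  rw [h2]
  simp
  ring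

lemma pd_shape4 {A B C D : ℝ × ℝ → ℝ} {p v : ℝ × ℝ} (hA : DifferentiableAt ℝ A p)
    (hB : DifferentiableAt ℝ B p) (hC : DifferentiableAt ℝ C p)
    (hD : DifferentiableAt ℝ D p) :
    pd v (fun r => A r * B r + C r * D r) p
      = (pd v A p * B p + A p * pd v B p) + (pd v C p * D p + C p * pd v D p) := by
  have H : HasFDerivAt (fun r => A r * B r + C r * D r)
      ((A p • fderiv ℝ B p + B p • fderiv ℝ A p)
        + (C p • fderiv ℝ D p + D p • fderiv ℝ C p)) p :=
    (hA.hasFDerivAt.mul hB.hasFDerivAt).add (hC.hasFDerivAt.mul hD.hasFDerivAt)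
  have h2 := H.fderiv
  unfold pd
  rw [h2]
  simp
  ring

lemma pd_const_mul {A : ℝ × ℝ → ℝ} (c : ℝ) {p v : ℝ × ℝ} (hA : DifferentiableAt ℝ A p) :
    pd v (fun r => c * A r) p = c * pd v A p := by
  have H : HasFDerivAt (fun r => c * A r) (c • fderiv ℝ A p) p :=
    hA.hasFDerivAt.const_mul c
  have h2 := H.fderiv
  unfold pd
  rw [h2]
  simp

lemma pd_comp2 {A B G2 : ℝ × ℝ → ℝ} {p v : ℝ × ℝ} (hA : DifferentiableAt ℝ A p)
    (hB : DifferentiableAt ℝ B p) (hG : DifferentiableAt ℝ G2 (A p, B p)) :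
    pd v (fun q => G2 (A q, B q)) p
      = pd (1, 0) G2 (A p, B p) * pd v A p + pd (0, 1) G2 (A p, B p) * pd v B p := by
  have H : HasFDerivAt (fun q => G2 (A q, B q))
      ((fderiv ℝ G2 (A p, B p)).comp ((fderiv ℝ A p).prod (fderiv ℝ B p))) p :=
    hG.hasFDerivAt.comp p (hA.hasFDerivAt.prodMk hB.hasFDerivAt)
  have h2 := H.fderiv
  unfold pd
  rw [h2]
  have hdec : ∀ (φ : ℝ × ℝ →L[ℝ] ℝ) (a b : ℝ), φ (a, b) = φ (1, 0) * a + φ (0, 1) * b := by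
    intro φ a b
    have hab : ((a, b) : ℝ × ℝ) = a • ((1 : ℝ), (0 : ℝ)) + b • ((0 : ℝ), (1 : ℝ)) := by
      simp [Prod.ext_iff]
    rw [hab, map_add, map_smul, map_smul, smul_eq_mul, smul_eq_mul]
    ring
  simp only [ContinuousLinearMap.comp_apply, ContinuousLinearMap.prod_apply]
  exact hdec _ _ _

/-- The quotient of Burgers' equation with respect to the symmetry algebra
`⟨∂_t, ∂_x, t∂_x + ∂_u⟩`: along a solution `u` with
`u_{tx}u_{xxx} − u_{xx}u_{txx} ≠ 0`, a smooth function `h` with `u_{xxx} = h(u_x, u_{xx})`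
satisfies `J² h_{II} + 2JH h_{IJ} + H² h_{JJ} + I² h_I + 3IJ h_J − 4IH − 3J² = 0`
at `(I,J) = (u_x, u_{xx})`, `H = h(I,J)`. -/
theorem burgers_quotient
    (U : Set (ℝ × ℝ)) (hU : IsOpen U)
    (u : ℝ → ℝ → ℝ) (hu : Smooth2On u U)
    (hsol : ∀ p ∈ U, d1 u p.1 p.2 + u p.1 p.2 * d2 u p.1 p.2 = d2 (d2 u) p.1 p.2)
    (hnd : ∀ p ∈ U,
      d1 (d2 u) p.1 p.2 * d2 (d2 (d2 u)) p.1 p.2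
        - d2 (d2 u) p.1 p.2 * d1 (d2 (d2 u)) p.1 p.2 ≠ 0)
    (W : Set (ℝ × ℝ)) (hW : IsOpen W)
    (hWsub : ∀ p ∈ U, (d2 u p.1 p.2, d2 (d2 u) p.1 p.2) ∈ W)
    (h : ℝ → ℝ → ℝ) (hh : Smooth2On h W)
    (hcon : ∀ p ∈ U, d2 (d2 (d2 u)) p.1 p.2 = h (d2 u p.1 p.2) (d2 (d2 u) p.1 p.2)) :
    ∀ p ∈ U,
      (d2 (d2 u) p.1 p.2)^2 * d1 (d1 h) (d2 u p.1 p.2) (d2 (d2 u) p.1 p.2)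
      + 2 * d2 (d2 u) p.1 p.2 * h (d2 u p.1 p.2) (d2 (d2 u) p.1 p.2)
          * d1 (d2 h) (d2 u p.1 p.2) (d2 (d2 u) p.1 p.2)
      + (h (d2 u p.1 p.2) (d2 (d2 u) p.1 p.2))^2
          * d2 (d2 h) (d2 u p.1 p.2) (d2 (d2 u) p.1 p.2)
      + (d2 u p.1 p.2)^2 * d1 h (d2 u p.1 p.2) (d2 (d2 u) p.1 p.2)
      + 3 * d2 u p.1 p.2 * d2 (d2 u) p.1 p.2
          * d2 h (d2 u p.1 p.2) (d2 (d2 u) p.1 p.2)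
      - 4 * d2 u p.1 p.2 * h (d2 u p.1 p.2) (d2 (d2 u) p.1 p.2)
      - 3 * (d2 (d2 u) p.1 p.2)^2 = 0 := by
  intro p hp
  set F : ℝ × ℝ → ℝ := fun q => u q.1 q.2 with hFdef
  set HF : ℝ × ℝ → ℝ := fun q => h q.1 q.2 with hHFdef
  have sF : ContDiffOn ℝ (⊤ : ℕ∞) F U := hu
  have sH : ContDiffOn ℝ (⊤ : ℕ∞) HF W := hh
  set F1 := pd (0, 1) F with hF1def
  set F2 := pd (0, 1) F1 with hF2def
  set F3 := pd (0, 1) F2 with hF3def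
  set F4 := pd (0, 1) F3 with hF4def
  set F5 := pd (0, 1) F4 with hF5def
  set Ft := pd (1, 0) F with hFtdef
  set P1 := pd (1, 0) HF with hP1def
  set P2 := pd (0, 1) HF with hP2def
  have sF1 : ContDiffOn ℝ (⊤ : ℕ∞) F1 U := pd_smooth hU sF _
  have sF2 : ContDiffOn ℝ (⊤ : ℕ∞) F2 U := pd_smooth hU sF1 _
  have sF3 : ContDiffOn ℝ (⊤ : ℕ∞) F3 U := pd_smooth hU sF2 _
  have sF4 : ContDiffOn ℝ (⊤ : ℕ∞) F4 U := pd_smooth hU sF3 _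
  have sFt : ContDiffOn ℝ (⊤ : ℕ∞) Ft U := pd_smooth hU sF _
  have sP1 : ContDiffOn ℝ (⊤ : ℕ∞) P1 W := pd_smooth hW sH _
  have sP2 : ContDiffOn ℝ (⊤ : ℕ∞) P2 W := pd_smooth hW sH _
  have dF : ∀ q ∈ U, DifferentiableAt ℝ F q := fun q hq => diffAt hU sF hq
  have dF1 : ∀ q ∈ U, DifferentiableAt ℝ F1 q := fun q hq => diffAt hU sF1 hq
  have dF2 : ∀ q ∈ U, DifferentiableAt ℝ F2 q := fun q hq => diffAt hU sF2 hq
  have dF3 : ∀ q ∈ U, DifferentiableAt ℝ F3 q := fun q hq => diffAt hU sF3 hq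
  have dF4 : ∀ q ∈ U, DifferentiableAt ℝ F4 q := fun q hq => diffAt hU sF4 hq
  have dHF : ∀ q ∈ W, DifferentiableAt ℝ HF q := fun q hq => diffAt hW sH hq
  have dP1 : ∀ q ∈ W, DifferentiableAt ℝ P1 q := fun q hq => diffAt hW sP1 hq
  have dP2 : ∀ q ∈ W, DifferentiableAt ℝ P2 q := fun q hq => diffAt hW sP2 hq
  -- bridges for u
  have b1 : ∀ q ∈ U, d1 u q.1 q.2 = Ft q := fun q hq => d1_bridge hU sF (fun r _ => rfl) hq
  have b2 : ∀ q ∈ U, d2 u q.1 q.2 = F1 q := fun q hq => d2_bridge hU sF (fun r _ => rfl) hq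
  have b22 : ∀ q ∈ U, d2 (d2 u) q.1 q.2 = F2 q := fun q hq => d2_bridge hU sF1 b2 hq
  have b222 : ∀ q ∈ U, d2 (d2 (d2 u)) q.1 q.2 = F3 q := fun q hq => d2_bridge hU sF2 b22 hq
  -- bridges for h
  have bq1 : ∀ q ∈ W, d1 h q.1 q.2 = P1 q := fun q hq => d1_bridge hW sH (fun r _ => rfl) hq
  have bq2 : ∀ q ∈ W, d2 h q.1 q.2 = P2 q := fun q hq => d2_bridge hW sH (fun r _ => rfl) hq
  have bq11 : ∀ q ∈ W, d1 (d1 h) q.1 q.2 = pd (1, 0) P1 q :=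
    fun q hq => d1_bridge hW sP1 bq1 hq
  have bq12 : ∀ q ∈ W, d1 (d2 h) q.1 q.2 = pd (1, 0) P2 q :=
    fun q hq => d1_bridge hW sP2 bq2 hq
  have bq22 : ∀ q ∈ W, d2 (d2 h) q.1 q.2 = pd (0, 1) P2 q :=
    fun q hq => d2_bridge hW sP2 bq2 hq
  have hZW : ∀ q ∈ U, (F1 q, F2 q) ∈ W := by
    intro q hq
    have := hWsub q hq
    rwa [b2 q hq, b22 q hq] at this
  -- Burgers in pd world
  have EB : ∀ q ∈ U, Ft q = F2 q - F q * F1 q := by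
    intro q hq
    have hs := hsol q hq
    rw [b1 q hq, b2 q hq, b22 q hq] at hs
    have : u q.1 q.2 = F q := rfl
    rw [this] at hs
    linarith
  have EC : ∀ q ∈ U, F3 q = HF (F1 q, F2 q) := by
    intro q hq
    have hc := hcon q hq
    rw [b2 q hq, b22 q hq, b222 q hq] at hc
    exact hc
  -- x-derivatives of Burgers
  have E1 : ∀ q ∈ U, pd (0, 1) Ft q = F3 q - F1 q * F1 q - F q * F2 q := by
    intro q hq
    have h1 : pd (0, 1) Ft q = pd (0, 1) (fun r => F2 r - F r * F1 r) q :=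
      pd_congr hU (fun r hr => EB r hr) hq (0, 1)
    rw [h1, pd_sub_mul (dF2 q hq) (dF q hq) (dF1 q hq), ← hF1def, ← hF2def, ← hF3def]
    ring
  have E2 : ∀ q ∈ U, pd (0, 1) (pd (0, 1) Ft) q
      = F4 q - (3 * F1 q) * F2 q - F q * F3 q := by
    intro q hq
    have h1 : pd (0, 1) (pd (0, 1) Ft) q
        = pd (0, 1) (fun r => F3 r - F1 r * F1 r - F r * F2 r) q :=
      pd_congr hU (fun r hr => E1 r hr) hq (0, 1)
    rw [h1, pd_shape3 (dF3 q hq) (dF1 q hq) (dF1 q hq) (dF q hq) (dF2 q hq),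
      ← hF1def, ← hF2def, ← hF3def, ← hF4def]
    ring
  have E3 : pd (0, 1) (pd (0, 1) (pd (0, 1) Ft)) p
      = F5 p - 3 * (F2 p * F2 p) - 4 * (F1 p * F3 p) - F p * F4 p := by
    have h1 : pd (0, 1) (pd (0, 1) (pd (0, 1) Ft)) p
        = pd (0, 1) (fun r => F4 r - (3 * F1 r) * F2 r - F r * F3 r) p :=
      pd_congr hU (fun r hr => E2 r hr) hp (0, 1)
    have hB3 : DifferentiableAt ℝ (fun r => 3 * F1 r) p := (dF1 p hp).const_mul 3
    rw [h1, pd_shape3 (dF4 p hp) hB3 (dF2 p hp) (dF p hp) (dF3 p hp),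
      pd_const_mul 3 (dF1 p hp), ← hF2def, ← hF3def, ← hF4def, ← hF5def]
    ring
  -- x-derivatives of the constraint
  have EE : ∀ q ∈ U, F4 q = P1 (F1 q, F2 q) * F2 q + P2 (F1 q, F2 q) * F3 q := by
    intro q hq
    have h1 : pd (0, 1) F3 q = pd (0, 1) (fun r => HF (F1 r, F2 r)) q :=
      pd_congr hU (fun r hr => EC r hr) hq (0, 1)
    have h2 := pd_comp2 (v := ((0 : ℝ), (1 : ℝ))) (dF1 q hq) (dF2 q hq) (dHF _ (hZW q hq))
    rw [hF4def, h1, h2, ← hF2def, ← hF3def, ← hP1def, ← hP2def]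
  have hA7 : DifferentiableAt ℝ (fun r => P1 (F1 r, F2 r)) p :=
    by have := (dP1 _ (hZW p hp)).comp p ((dF1 p hp).prodMk (dF2 p hp)); exact this
  have hC7 : DifferentiableAt ℝ (fun r => P2 (F1 r, F2 r)) p :=
    by have := (dP2 _ (hZW p hp)).comp p ((dF1 p hp).prodMk (dF2 p hp)); exact this
  have E7 : F5 p
      = ((pd (1, 0) P1 (F1 p, F2 p) * F2 p + pd (0, 1) P1 (F1 p, F2 p) * F3 p) * F2 p
          + P1 (F1 p, F2 p) * F3 p)
        + ((pd (1, 0) P2 (F1 p, F2 p) * F2 p + pd (0, 1) P2 (F1 p, F2 p) * F3 p) * F3 p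
          + P2 (F1 p, F2 p) * F4 p) := by
    have h1 : pd (0, 1) F4 p
        = pd (0, 1) (fun r => P1 (F1 r, F2 r) * F2 r + P2 (F1 r, F2 r) * F3 r) p :=
      pd_congr hU (fun r hr => EE r hr) hp (0, 1)
    have h2 := pd_shape4 (v := ((0 : ℝ), (1 : ℝ))) hA7 (dF2 p hp) hC7 (dF3 p hp)
    have h3 := pd_comp2 (v := ((0 : ℝ), (1 : ℝ))) (dF1 p hp) (dF2 p hp) (dP1 _ (hZW p hp))
    have h4 := pd_comp2 (v := ((0 : ℝ), (1 : ℝ))) (dF1 p hp) (dF2 p hp) (dP2 _ (hZW p hp))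
    rw [hF5def, h1, h2, h3, h4, ← hF2def, ← hF3def, ← hF4def]
  -- t-derivative of the constraint
  have E8t : pd (1, 0) F3 p
      = P1 (F1 p, F2 p) * pd (1, 0) F1 p + P2 (F1 p, F2 p) * pd (1, 0) F2 p := by
    have h1 : pd (1, 0) F3 p = pd (1, 0) (fun r => HF (F1 r, F2 r)) p :=
      pd_congr hU (fun r hr => EC r hr) hp (1, 0)
    have h2 := pd_comp2 (v := ((1 : ℝ), (0 : ℝ))) (dF1 p hp) (dF2 p hp) (dHF _ (hZW p hp))
    rw [h1, h2, ← hP1def, ← hP2def]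
  -- Clairaut conversions
  have c1 : ∀ q ∈ U, pd (1, 0) F1 q = pd (0, 1) Ft q := by
    intro q hq
    rw [hF1def, hFtdef]
    exact clairaut hU sF hq (0, 1) (1, 0)
  have c2 : ∀ q ∈ U, pd (1, 0) F2 q = pd (0, 1) (pd (0, 1) Ft) q := by
    intro q hq
    have ha : pd (1, 0) F2 q = pd (0, 1) (pd (1, 0) F1) q := by
      rw [hF2def]
      exact clairaut hU sF1 hq (0, 1) (1, 0)
    rw [ha]
    exact pd_congr hU c1 hq (0, 1)
  have c3 : pd (1, 0) F3 p = pd (0, 1) (pd (0, 1) (pd (0, 1) Ft)) p := by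
    have ha : pd (1, 0) F3 p = pd (0, 1) (pd (1, 0) F2) p := by
      rw [hF3def]
      exact clairaut hU sF2 hp (0, 1) (1, 0)
    rw [ha]
    exact pd_congr hU c2 hp (0, 1)
  have E8 : pd (0, 1) (pd (0, 1) (pd (0, 1) Ft)) p
      = P1 (F1 p, F2 p) * pd (0, 1) Ft p
        + P2 (F1 p, F2 p) * pd (0, 1) (pd (0, 1) Ft) p := by
    rw [← c3, ← c1 p hp, ← c2 p hp]
    exact E8t
  have hcl : pd (1, 0) P2 (F1 p, F2 p) = pd (0, 1) P1 (F1 p, F2 p) := by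
    rw [hP1def, hP2def]
    exact clairaut hW sH (hZW p hp) (0, 1) (1, 0)
  -- rewrite the goal
  have w1 : d1 h (F1 p) (F2 p) = P1 (F1 p, F2 p) := bq1 (F1 p, F2 p) (hZW p hp)
  have w2 : d2 h (F1 p) (F2 p) = P2 (F1 p, F2 p) := bq2 (F1 p, F2 p) (hZW p hp)
  have w11 : d1 (d1 h) (F1 p) (F2 p) = pd (1, 0) P1 (F1 p, F2 p) :=
    bq11 (F1 p, F2 p) (hZW p hp)
  have w12 : d1 (d2 h) (F1 p) (F2 p) = pd (1, 0) P2 (F1 p, F2 p) :=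
    bq12 (F1 p, F2 p) (hZW p hp)
  have w22 : d2 (d2 h) (F1 p) (F2 p) = pd (0, 1) P2 (F1 p, F2 p) :=
    bq22 (F1 p, F2 p) (hZW p hp)
  have wh : h (F1 p) (F2 p) = HF (F1 p, F2 p) := rfl
  rw [b2 p hp, b22 p hp, w1, w2, w11, w12, w22, wh, ← EC p hp]
  linear_combination (-1 : ℝ) * E3 + E8 + P1 (F1 p, F2 p) * (E1 p hp)
    + P2 (F1 p, F2 p) * (E2 p hp) - E7 + F p * (EE p hp) + (F2 p * F3 p) * hcl
end

section
/- Let U ⊆ ℝ² be open and let u : U → ℝ be a smooth solution of Liouville's equation u_{tx} + e^u = 0 on U. Let W ⊆ ℝ² be an open set containing {(x, u_x(t,x)) : (t,x) ∈ U} and let h : W → ℝ be smooth with u_{xx}(t,x) = h(x, u_x(t,x)) for all (t,x) ∈ U. Then ∂₂h(x, u_x(t,x)) = u_x(t,x) for all (t,x) ∈ U; i.e., h satisfies the quotient equation h_J − J = 0 along the solution. -/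
open Real

-- derivative along horizontal line
lemma lineD1 {E : Type*} [NormedAddCommGroup E] [NormedSpace ℝ E]
    (F : ℝ × ℝ → E) {a b : ℝ} (hF : DifferentiableAt ℝ F (a, b)) :
    HasDerivAt (fun s => F (s, b)) (fderiv ℝ F (a, b) (1, 0)) a := by
  have hline : HasDerivAt (fun s : ℝ => ((s, b) : ℝ × ℝ)) ((1 : ℝ), (0 : ℝ)) a :=
    (hasDerivAt_id a).prodMk (hasDerivAt_const a b)
  exact hF.hasFDerivAt.comp_hasDerivAt a hline

lemma lineD2 {E : Type*} [NormedAddCommGroup E] [NormedSpace ℝ E]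
    (F : ℝ × ℝ → E) {a b : ℝ} (hF : DifferentiableAt ℝ F (a, b)) :
    HasDerivAt (fun s => F (a, s)) (fderiv ℝ F (a, b) (0, 1)) b := by
  have hline : HasDerivAt (fun s : ℝ => ((a, s) : ℝ × ℝ)) ((0 : ℝ), (1 : ℝ)) b :=
    (hasDerivAt_const b a).prodMk (hasDerivAt_id b)
  exact hF.hasFDerivAt.comp_hasDerivAt b hline

lemma two_le_top : (2 : WithTop ℕ∞) ≤ ((⊤ : ℕ∞) : WithTop ℕ∞) := by
  rw [show (2 : WithTop ℕ∞) = ((2 : ℕ∞) : WithTop ℕ∞) from rfl]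
  exact WithTop.coe_le_coe.mpr le_top

lemma top_add_one_le : ((⊤ : ℕ∞) : WithTop ℕ∞) + 1 ≤ ((⊤ : ℕ∞) : WithTop ℕ∞) := by
  exact_mod_cast (le_refl (⊤ : ℕ∞))

-- Schwarz / Clairaut on an open set
lemma schwarz (f : ℝ → ℝ → ℝ) (U : Set (ℝ × ℝ)) (hU : IsOpen U)
    (hf : Smooth2On f U) {a b : ℝ} (hab : (a, b) ∈ U) :
    d1 (d2 f) a b = d2 (d1 f) a b := by
  set F : ℝ × ℝ → ℝ := fun p => f p.1 p.2 with hFdef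
  have hmem : ∀ p ∈ U, DifferentiableAt ℝ F p := fun p hp =>
    ((hf p hp).contDiffAt (hU.mem_nhds hp)).differentiableAt (by simp)
  have hFat : ContDiffAt ℝ ((⊤ : ℕ∞) : WithTop ℕ∞) F (a, b) :=
    (hf (a, b) hab).contDiffAt (hU.mem_nhds hab)
  have hG : ContDiffAt ℝ ((⊤ : ℕ∞) : WithTop ℕ∞) (fderiv ℝ F) (a, b) :=
    hFat.fderiv_right top_add_one_le
  have hGdiff : DifferentiableAt ℝ (fderiv ℝ F) (a, b) :=
    hG.differentiableAt (by simp)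
  -- d2 f p = fderiv F p (0,1) on U ; d1 f p = fderiv F p (1,0) on U
  have hd2 : ∀ p ∈ U, d2 f p.1 p.2 = fderiv ℝ F p (0, 1) := fun p hp =>
    (lineD2 F (hmem p hp)).deriv
  have hd1 : ∀ p ∈ U, d1 f p.1 p.2 = fderiv ℝ F p (1, 0) := fun p hp =>
    (lineD1 F (hmem p hp)).deriv
  have happly : ∀ v : ℝ × ℝ, HasDerivAt (fun s => fderiv ℝ F (s, b) v)
      (fderiv ℝ (fderiv ℝ F) (a, b) (1, 0) v) a := by
    intro v
    have h1 : HasDerivAt (fun s => fderiv ℝ F (s, b)) (fderiv ℝ (fderiv ℝ F) (a, b) (1, 0)) a :=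
      lineD1 (fderiv ℝ F) hGdiff
    have := ((ContinuousLinearMap.apply ℝ ℝ v).hasFDerivAt.comp_hasDerivAt a h1)
    exact this
  have happly2 : ∀ v : ℝ × ℝ, HasDerivAt (fun s => fderiv ℝ F (a, s) v)
      (fderiv ℝ (fderiv ℝ F) (a, b) (0, 1) v) b := by
    intro v
    have h1 : HasDerivAt (fun s => fderiv ℝ F (a, s)) (fderiv ℝ (fderiv ℝ F) (a, b) (0, 1)) b :=
      lineD2 (fderiv ℝ F) hGdiff
    have := ((ContinuousLinearMap.apply ℝ ℝ v).hasFDerivAt.comp_hasDerivAt b h1)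
    exact this
  have hsymm : IsSymmSndFDerivAt ℝ F (a, b) := hFat.isSymmSndFDerivAt (by simpa [minSmoothness_of_isRCLikeNormedField] using two_le_top)
  -- compute d1 (d2 f) a b
  have e1 : d1 (d2 f) a b = fderiv ℝ (fderiv ℝ F) (a, b) (1, 0) (0, 1) := by
    have hev : (fun s => d2 f s b) =ᶠ[nhds a] fun s => fderiv ℝ F (s, b) (0, 1) := by
      have : ∀ᶠ s in nhds a, (s, b) ∈ U := by
        have hc : Continuous fun s : ℝ => ((s, b) : ℝ × ℝ) := by fun_prop
        exact hc.continuousAt.preimage_mem_nhds (hU.mem_nhds hab)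
      filter_upwards [this] with s hs
      exact hd2 (s, b) hs
    calc d1 (d2 f) a b = deriv (fun s => fderiv ℝ F (s, b) (0, 1)) a := hev.deriv_eq
      _ = fderiv ℝ (fderiv ℝ F) (a, b) (1, 0) (0, 1) := (happly (0, 1)).deriv
  have e2 : d2 (d1 f) a b = fderiv ℝ (fderiv ℝ F) (a, b) (0, 1) (1, 0) := by
    have hev : (fun s => d1 f a s) =ᶠ[nhds b] fun s => fderiv ℝ F (a, s) (1, 0) := by
      have : ∀ᶠ s in nhds b, (a, s) ∈ U := by
        have hc : Continuous fun s : ℝ => ((a, s) : ℝ × ℝ) := by fun_prop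
        exact hc.continuousAt.preimage_mem_nhds (hU.mem_nhds hab)
      filter_upwards [this] with s hs
      exact hd1 (a, s) hs
    calc d2 (d1 f) a b = deriv (fun s => fderiv ℝ F (a, s) (1, 0)) b := hev.deriv_eq
      _ = fderiv ℝ (fderiv ℝ F) (a, b) (0, 1) (1, 0) := (happly2 (1, 0)).deriv
  rw [e1, e2, hsymm (1, 0) (0, 1)]


/-- Quotient of Liouville's equation `u_{tx} + e^u = 0`: along a solution, a smooth `h`
with `u_{xx} = h(x, u_x)` satisfies `h_J = J` at `(I,J) = (x, u_x)`. -/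
theorem liouville_quotient
    (U : Set (ℝ × ℝ)) (hU : IsOpen U)
    (u : ℝ → ℝ → ℝ) (hu : Smooth2On u U)
    (hsol : ∀ p ∈ U, d1 (d2 u) p.1 p.2 + Real.exp (u p.1 p.2) = 0)
    (W : Set (ℝ × ℝ)) (hW : IsOpen W)
    (hWsub : ∀ p ∈ U, (p.2, d2 u p.1 p.2) ∈ W)
    (h : ℝ → ℝ → ℝ) (hh : Smooth2On h W)
    (hcon : ∀ p ∈ U, d2 (d2 u) p.1 p.2 = h p.2 (d2 u p.1 p.2)) :
    ∀ p ∈ U, d2 h p.2 (d2 u p.1 p.2) = d2 u p.1 p.2 := by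
  rintro ⟨t0, x0⟩ hp
  set F : ℝ × ℝ → ℝ := fun p => u p.1 p.2 with hFdef
  set J : ℝ := d2 u t0 x0 with hJ
  set v : ℝ → ℝ → ℝ := d2 u with hv
  have hmemF : ∀ p ∈ U, DifferentiableAt ℝ F p := fun p hp =>
    ((hu p hp).contDiffAt (hU.mem_nhds hp)).differentiableAt (by simp)
  -- v is smooth on U
  have hvU : Smooth2On v U := by
    have hfd : ContDiffOn ℝ ((⊤ : ℕ∞) : WithTop ℕ∞) (fderiv ℝ F) U :=
      hu.fderiv_of_isOpen hU top_add_one_le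
    have : ContDiffOn ℝ ((⊤ : ℕ∞) : WithTop ℕ∞)
        (fun p : ℝ × ℝ => fderiv ℝ F p ((0 : ℝ), (1 : ℝ))) U :=
      (ContinuousLinearMap.apply ℝ ℝ ((0 : ℝ), (1 : ℝ))).contDiff.comp_contDiffOn hfd
    refine this.congr fun p hp => ?_
    exact (lineD2 F (hmemF p hp)).deriv.symm ▸ rfl
  have hVdiff : DifferentiableAt ℝ (fun p : ℝ × ℝ => v p.1 p.2) (t0, x0) :=
    ((hvU _ hp).contDiffAt (hU.mem_nhds hp)).differentiableAt (by simp)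
  -- derivative of t ↦ v t x0
  have hw0 := lineD1 (fun p : ℝ × ℝ => v p.1 p.2) hVdiff
  have hw : HasDerivAt (fun t => v t x0) (d1 v t0 x0) t0 := by
    rw [show d1 v t0 x0 = _ from hw0.deriv]; exact hw0
  have hs0 : d1 v t0 x0 + Real.exp (u t0 x0) = 0 := hsol (t0, x0) hp
  have hc : d1 v t0 x0 = -Real.exp (u t0 x0) := by linarith
  -- derivative of h in second variable at (x0, J)
  have hWmem : (x0, J) ∈ W := hWsub (t0, x0) hp
  have hHdiff : DifferentiableAt ℝ (fun p : ℝ × ℝ => h p.1 p.2) (x0, J) :=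
    ((hh _ hWmem).contDiffAt (hW.mem_nhds hWmem)).differentiableAt (by simp)
  have hh0 := lineD2 (fun p : ℝ × ℝ => h p.1 p.2) hHdiff
  have hh2 : HasDerivAt (fun s => h x0 s) (d2 h x0 J) J := by
    rw [show d2 h x0 J = _ from hh0.deriv]; exact hh0
  have hcomp : HasDerivAt (fun t => h x0 (v t x0)) (d2 h x0 J * d1 v t0 x0) t0 :=
    hh2.comp t0 hw
  -- eventual membership
  have hUt : ∀ᶠ t in nhds t0, (t, x0) ∈ U := by
    have hcont : Continuous fun t : ℝ => ((t, x0) : ℝ × ℝ) := by fun_prop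
    exact hcont.continuousAt.preimage_mem_nhds (hU.mem_nhds hp)
  have hUx : ∀ᶠ s in nhds x0, (t0, s) ∈ U := by
    have hcont : Continuous fun s : ℝ => ((t0, s) : ℝ × ℝ) := by fun_prop
    exact hcont.continuousAt.preimage_mem_nhds (hU.mem_nhds hp)
  have key1 : d1 (d2 v) t0 x0 = d2 h x0 J * d1 v t0 x0 := by
    have hev : (fun t => d2 v t x0) =ᶠ[nhds t0] fun t => h x0 (v t x0) := by
      filter_upwards [hUt] with t ht
      exact hcon (t, x0) ht
    calc d1 (d2 v) t0 x0 = deriv (fun t => h x0 (v t x0)) t0 := hev.deriv_eq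
      _ = d2 h x0 J * d1 v t0 x0 := hcomp.deriv
  have key2 : d2 (d1 v) t0 x0 = -(Real.exp (u t0 x0) * J) := by
    have h0 := lineD2 F (hmemF (t0, x0) hp)
    have hux : HasDerivAt (fun s => u t0 s) J x0 := by
      rw [show J = _ from h0.deriv]; exact h0
    have hder : HasDerivAt (fun s => -Real.exp (u t0 s)) (-(Real.exp (u t0 x0) * J)) x0 :=
      hux.exp.neg
    have hev : (fun s => d1 v t0 s) =ᶠ[nhds x0] fun s => -Real.exp (u t0 s) := by
      filter_upwards [hUx] with s hs
      have hss : d1 v t0 s + Real.exp (u t0 s) = 0 := hsol (t0, s) hs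
      linarith
    calc d2 (d1 v) t0 x0 = deriv (fun s => -Real.exp (u t0 s)) x0 := hev.deriv_eq
      _ = -(Real.exp (u t0 x0) * J) := hder.deriv
  have hsch := schwarz v U hU hvU hp
  have heq : d2 h x0 J * (-Real.exp (u t0 x0)) = -(Real.exp (u t0 x0) * J) := by
    rw [← hc, ← key1, hsch, key2]
  have hne := Real.exp_ne_zero (u t0 x0)
  have hfin : d2 h x0 J * Real.exp (u t0 x0) = J * Real.exp (u t0 x0) := by nlinarith [heq]
  exact mul_right_cancel₀ hne hfin
end

section
/- Let U ⊆ ℝ² be open and let u : U → ℝ be a smooth solution of Liouville's equation u_{tx} + e^u = 0 on U. Define K(t,x) := (2·u_{tt}(t,x) − u_t(t,x)²)·e^{−2u(t,x)}. Then ∂K/∂x + 2·u_x·K = 0 everywhere on U; equivalently, ∂/∂x (2·u_{tt} − u_t²) = 0 on U, so that 2u_{tt} − u_t² is a function of t alone along every solution. -/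
open Real

section Aux

lemma hasDerivAt_slice1 {E : Type*} [NormedAddCommGroup E] [NormedSpace ℝ E]
    {g : ℝ × ℝ → E} {a b : ℝ} (hg : DifferentiableAt ℝ g (a, b)) :
    HasDerivAt (fun s => g (s, b)) (fderiv ℝ g (a, b) (1, 0)) a := by
  have h1 : HasFDerivAt (fun s : ℝ => (s, b))
      ((ContinuousLinearMap.id ℝ ℝ).prod 0) a :=
    HasFDerivAt.prodMk (hasFDerivAt_id a) (hasFDerivAt_const b a)
  have := (hg.hasFDerivAt.comp a h1).hasDerivAt
  simpa [Function.comp_def] using this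

lemma hasDerivAt_slice2 {E : Type*} [NormedAddCommGroup E] [NormedSpace ℝ E]
    {g : ℝ × ℝ → E} {a b : ℝ} (hg : DifferentiableAt ℝ g (a, b)) :
    HasDerivAt (fun s => g (a, s)) (fderiv ℝ g (a, b) (0, 1)) b := by
  have h1 : HasFDerivAt (fun s : ℝ => (a, s))
      ((0 : ℝ →L[ℝ] ℝ).prod (ContinuousLinearMap.id ℝ ℝ)) b :=
    HasFDerivAt.prodMk (hasFDerivAt_const a b) (hasFDerivAt_id b)
  have := (hg.hasFDerivAt.comp b h1).hasDerivAt
  simpa [Function.comp_def] using this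

variable {f : ℝ → ℝ → ℝ} {U : Set (ℝ × ℝ)}

lemma diffAt_of_smooth2On (hU : IsOpen U) (hf : Smooth2On f U) {a b : ℝ}
    (hp : (a, b) ∈ U) : DifferentiableAt ℝ (fun q : ℝ × ℝ => f q.1 q.2) (a, b) :=
  (hf.contDiffAt (hU.mem_nhds hp)).differentiableAt (by simp)

lemma hasDerivAt_d1 (hU : IsOpen U) (hf : Smooth2On f U) {a b : ℝ} (hp : (a, b) ∈ U) :
    HasDerivAt (fun s => f s b) (d1 f a b) a := by
  have h := hasDerivAt_slice1 (diffAt_of_smooth2On hU hf hp)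
  have : d1 f a b = fderiv ℝ (fun q : ℝ × ℝ => f q.1 q.2) (a, b) (1, 0) := by
    rw [d1]; simpa using h.deriv
  rw [this]; exact h

lemma hasDerivAt_d2 (hU : IsOpen U) (hf : Smooth2On f U) {a b : ℝ} (hp : (a, b) ∈ U) :
    HasDerivAt (fun s => f a s) (d2 f a b) b := by
  have h := hasDerivAt_slice2 (diffAt_of_smooth2On hU hf hp)
  have : d2 f a b = fderiv ℝ (fun q : ℝ × ℝ => f q.1 q.2) (a, b) (0, 1) := by
    rw [d2]; simpa using h.deriv
  rw [this]; exact h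

lemma d1_smooth2On (hU : IsOpen U) (hf : Smooth2On f U) : Smooth2On (d1 f) U := by
  have hG : ContDiffOn ℝ (⊤ : ℕ∞) (fderiv ℝ (fun q : ℝ × ℝ => f q.1 q.2)) U :=
    hf.fderiv_of_isOpen hU (by exact_mod_cast le_top)
  have hGa : ContDiffOn ℝ (⊤ : ℕ∞)
      (fun q : ℝ × ℝ => (fderiv ℝ (fun q : ℝ × ℝ => f q.1 q.2) q) (1, 0)) U :=
    hG.clm_apply contDiffOn_const
  show ContDiffOn ℝ (⊤ : ℕ∞) (fun p : ℝ × ℝ => d1 f p.1 p.2) U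
  refine hGa.congr ?_
  intro q hq
  have h := hasDerivAt_slice1 (g := fun q : ℝ × ℝ => f q.1 q.2)
    (a := q.1) (b := q.2) (diffAt_of_smooth2On hU hf (by simpa using hq))
  rw [d1]; simpa using h.deriv

lemma d2_smooth2On (hU : IsOpen U) (hf : Smooth2On f U) : Smooth2On (d2 f) U := by
  have hG : ContDiffOn ℝ (⊤ : ℕ∞) (fderiv ℝ (fun q : ℝ × ℝ => f q.1 q.2)) U :=
    hf.fderiv_of_isOpen hU (by exact_mod_cast le_top)
  have hGa : ContDiffOn ℝ (⊤ : ℕ∞)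
      (fun q : ℝ × ℝ => (fderiv ℝ (fun q : ℝ × ℝ => f q.1 q.2) q) (0, 1)) U :=
    hG.clm_apply contDiffOn_const
  show ContDiffOn ℝ (⊤ : ℕ∞) (fun p : ℝ × ℝ => d2 f p.1 p.2) U
  refine hGa.congr ?_
  intro q hq
  have h := hasDerivAt_slice2 (g := fun q : ℝ × ℝ => f q.1 q.2)
    (a := q.1) (b := q.2) (diffAt_of_smooth2On hU hf (by simpa using hq))
  rw [d2]; simpa using h.deriv

lemma clairaut_s14 (hU : IsOpen U) (hf : Smooth2On f U) {a b : ℝ} (hp : (a, b) ∈ U) :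
    d2 (d1 f) a b = d1 (d2 f) a b := by
  set F : ℝ × ℝ → ℝ := fun q => f q.1 q.2 with hF
  set G : ℝ × ℝ → (ℝ × ℝ →L[ℝ] ℝ) := fderiv ℝ F with hGdef
  have hc : ContDiffAt ℝ (⊤ : ℕ∞) F (a, b) := hf.contDiffAt (hU.mem_nhds hp)
  have hGc : ContDiffAt ℝ (⊤ : ℕ∞) G (a, b) := hc.fderiv_right (by exact_mod_cast le_top)
  have hGd : DifferentiableAt ℝ G (a, b) := hGc.differentiableAt (by simp)
  have hdiff : ∀ᶠ q in nhds (a, b), HasFDerivAt F (G q) q := by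
    filter_upwards [hU.eventually_mem hp] with q hq
    exact ((hf.contDiffAt (hU.mem_nhds hq)).differentiableAt (by simp)).hasFDerivAt
  have hsymm := second_derivative_symmetric_of_eventually hdiff hGd.hasFDerivAt
    ((1 : ℝ), (0 : ℝ)) ((0 : ℝ), (1 : ℝ))
  have hmem2 : ∀ᶠ s in nhds b, (a, s) ∈ U :=
    ((Continuous.prodMk_right a).continuousAt).eventually_mem (hU.mem_nhds hp)
  have hmem1 : ∀ᶠ s in nhds a, (s, b) ∈ U :=
    ((continuous_id.prodMk continuous_const).continuousAt).eventually_mem (hU.mem_nhds hp)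
  -- d2 (d1 f) a b = (fderiv G (a,b) (0,1)) (1,0)
  have e1 : d2 (d1 f) a b = fderiv ℝ G (a, b) (0, 1) (1, 0) := by
    have hev : (fun s => d1 f a s) =ᶠ[nhds b] fun s => G (a, s) (1, 0) := by
      filter_upwards [hmem2] with s hs
      exact (hasDerivAt_slice1 (diffAt_of_smooth2On hU hf hs)).deriv
    have hD : HasDerivAt (fun s => G (a, s) (1, 0))
        (fderiv ℝ G (a, b) (0, 1) (1, 0)) b := by
      have := (hasDerivAt_slice2 hGd).clm_apply
        (hasDerivAt_const b ((1 : ℝ), (0 : ℝ)))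
      simpa using this
    calc d2 (d1 f) a b = deriv (fun s => G (a, s) (1, 0)) b := hev.deriv_eq
      _ = _ := hD.deriv
  have e2 : d1 (d2 f) a b = fderiv ℝ G (a, b) (1, 0) (0, 1) := by
    have hev : (fun s => d2 f s b) =ᶠ[nhds a] fun s => G (s, b) (0, 1) := by
      filter_upwards [hmem1] with s hs
      exact (hasDerivAt_slice2 (diffAt_of_smooth2On hU hf hs)).deriv
    have hD : HasDerivAt (fun s => G (s, b) (0, 1))
        (fderiv ℝ G (a, b) (1, 0) (0, 1)) a := by
      have := (hasDerivAt_slice1 hGd).clm_apply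
        (hasDerivAt_const a ((0 : ℝ), (1 : ℝ)))
      simpa using this
    calc d1 (d2 f) a b = deriv (fun s => G (s, b) (0, 1)) a := hev.deriv_eq
      _ = _ := hD.deriv
  rw [e1, e2]
  exact hsymm.symm

end Aux

/-- Along any smooth solution of Liouville's equation `u_{tx} + e^u = 0`, the invariant
`K = (2u_{tt} − u_t²)e^{−2u}` satisfies `∂K/∂x + 2u_x·K = 0`; equivalently
`∂/∂x (2u_{tt} − u_t²) = 0`, so `2u_{tt} − u_t²` is a function of `t` alone. -/
theorem liouville_invariant_K
    (U : Set (ℝ × ℝ)) (hU : IsOpen U)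
    (u : ℝ → ℝ → ℝ) (hu : Smooth2On u U)
    (hsol : ∀ p ∈ U, d1 (d2 u) p.1 p.2 + Real.exp (u p.1 p.2) = 0)
    (K : ℝ → ℝ → ℝ)
    (hK : ∀ t x : ℝ,
      K t x = (2 * d1 (d1 u) t x - (d1 u t x)^2) * Real.exp (-2 * u t x)) :
    (∀ p ∈ U, d2 K p.1 p.2 + 2 * d2 u p.1 p.2 * K p.1 p.2 = 0) ∧
    (∀ p ∈ U, d2 (fun t x => 2 * d1 (d1 u) t x - (d1 u t x)^2) p.1 p.2 = 0) := by
  have hw : Smooth2On (d1 u) U := d1_smooth2On hU hu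
  have hww : Smooth2On (d1 (d1 u)) U := d1_smooth2On hU hw
  -- main computation at a point of U
  have key : ∀ p ∈ U, HasDerivAt (fun s => 2 * d1 (d1 u) p.1 s - (d1 u p.1 s)^2)
      0 p.2 := by
    rintro ⟨a, b⟩ hp
    -- d2 (d1 u) = -exp u on U
    have h1 : ∀ s t : ℝ, (s, t) ∈ U → d2 (d1 u) s t = -Real.exp (u s t) := by
      intro s t hq
      have h3 := hsol (s, t) hq
      have h2 := clairaut_s14 hU hu hq
      simp only at h3
      linarith
    -- d2 (d1 (d1 u)) a b = - exp (u a b) * d1 u a b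
    have hA : d2 (d1 (d1 u)) a b = -(Real.exp (u a b) * d1 u a b) := by
      have hc := clairaut_s14 hU hw hp
      have hmem1 : ∀ᶠ s in nhds a, (s, b) ∈ U :=
        ((continuous_id.prodMk continuous_const).continuousAt).eventually_mem
          (hU.mem_nhds hp)
      have hev2 : (fun s => d2 (d1 u) s b) =ᶠ[nhds a] fun s => -Real.exp (u s b) := by
        filter_upwards [hmem1] with s hs
        exact h1 s b hs
      have hd : HasDerivAt (fun s => -Real.exp (u s b))
          (-(Real.exp (u a b) * d1 u a b)) a :=
        ((hasDerivAt_d1 hU hu hp).exp).neg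
      calc d2 (d1 (d1 u)) a b = d1 (d2 (d1 u)) a b := hc
        _ = deriv (fun s => -Real.exp (u s b)) a := hev2.deriv_eq
        _ = _ := hd.deriv
    have hB : HasDerivAt (fun s => d1 u a s) (d2 (d1 u) a b) b := hasDerivAt_d2 hU hw hp
    have hC : HasDerivAt (fun s => d1 (d1 u) a s) (d2 (d1 (d1 u)) a b) b :=
      hasDerivAt_d2 hU hww hp
    have hD := (hC.const_mul 2).sub (hB.pow 2)
    have : HasDerivAt (fun s => 2 * d1 (d1 u) a s - (d1 u a s) ^ 2) 0 b := by
      refine hD.congr_deriv ?_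
      rw [hA, h1 a b hp]
      push_cast
      ring
    exact this
  constructor
  · rintro ⟨a, b⟩ hp
    have hE : HasDerivAt (fun s => Real.exp (-2 * u a s))
        (Real.exp (-2 * u a b) * (-2 * d2 u a b)) b := by
      have := ((hasDerivAt_d2 hU hu hp).const_mul (-2)).exp
      simpa [mul_comm] using this
    have hF := (key (a, b) hp).mul hE
    simp only at hF
    have hKs : (fun s => K a s) = fun s =>
        (2 * d1 (d1 u) a s - (d1 u a s)^2) * Real.exp (-2 * u a s) := by
      funext s; exact hK a s
    have : d2 K a b = 0 * Real.exp (-2 * u a b) +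
        (2 * d1 (d1 u) a b - (d1 u a b)^2) *
          (Real.exp (-2 * u a b) * (-2 * d2 u a b)) := by
      show deriv (fun s => K a s) b = _
      rw [hKs]
      exact hF.deriv
    rw [this, hK a b]
    ring
  · rintro ⟨a, b⟩ hp
    exact (key (a, b) hp).deriv
end
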